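/- arXiv:2603.15190 — 6 statements merged into one kernel-verified Lean document; each statement's English description precedes it below -/
import Mathlib

section
/- Let q ≥ 1, N ≥ 0 and 0 ≤ t ≤ N be integers, let γ ∈ (0,1] be real, and let α : S_{q,N} → ℂ be a function with ∑_{n ∈ S_{q,N}} |α(n)|² = 1. Then ∑_{r=0}^{t} ∑_{r̲ ∈ S_{q,r}} (1−γ)^{N−r} γ^{r} ∑_{n ∈ S_{q,N}} |α(n)|² ∏_{i=0}^{q−1} C(n_i, r̲_i) = ∑_{r=0}^{t} C(N, r) γ^{r} (1−γ)^{N−r}, where C(a,b) denotes the binomial coefficient. -/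
open scoped BigOperators

/-- The discrete simplex `S_{q,N}`: q-tuples of nonnegative integers summing to `N`. -/
def simplex (q N : ℕ) : Finset (Fin q → ℕ) := Finset.Nat.antidiagonalTuple q N

lemma sum_antidiagonalTuple_succ {M : Type*} [AddCommMonoid M] (q r : ℕ)
    (g : (Fin (q + 1) → ℕ) → M) :
    ∑ rv ∈ Finset.Nat.antidiagonalTuple (q + 1) r, g rv
      = ∑ p ∈ Finset.HasAntidiagonal.antidiagonal r,
          ∑ rv ∈ Finset.Nat.antidiagonalTuple q p.2, g (Fin.cons p.1 rv) := by
  rw [Finset.sum_sigma']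
  refine Finset.sum_nbij'
    (i := fun (rv : Fin (q + 1) → ℕ) => (⟨(rv 0, ∑ i : Fin q, rv i.succ), Fin.tail rv⟩ : (_ : ℕ × ℕ) × (Fin q → ℕ)))
    (j := fun x => Fin.cons x.1.1 x.2) ?_ ?_ ?_ ?_ ?_
  · intro rv hrv
    rw [Finset.Nat.mem_antidiagonalTuple] at hrv
    simp only [Finset.mem_sigma, Finset.mem_antidiagonal,
      Finset.Nat.mem_antidiagonalTuple]
    exact ⟨by rw [← hrv, Fin.sum_univ_succ]; simp, rfl⟩
  · rintro ⟨⟨a, b⟩, rv⟩ hx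
    simp only [Finset.mem_sigma, Finset.mem_antidiagonal,
      Finset.Nat.mem_antidiagonalTuple] at hx
    rw [Finset.Nat.mem_antidiagonalTuple, Fin.sum_univ_succ]
    simpa [hx.2] using hx.1
  · intro rv _
    exact Fin.cons_self_tail rv
  · rintro ⟨⟨a, b⟩, rv⟩ hx
    simp only [Finset.mem_sigma, Finset.mem_antidiagonal,
      Finset.Nat.mem_antidiagonalTuple] at hx
    simp [Fin.tail_cons, hx.2]
  · intro rv _
    rw [Fin.cons_self_tail]

lemma vandermonde_tuple (q : ℕ) (n : Fin q → ℕ) (r : ℕ) :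
    ∑ rv ∈ Finset.Nat.antidiagonalTuple q r, ∏ i, (n i).choose (rv i)
      = (∑ i, n i).choose r := by
  induction q generalizing r with
  | zero =>
    cases r with
    | zero => simp
    | succ r => simp [Finset.Nat.antidiagonalTuple_zero_succ]
  | succ q ih =>
    rw [sum_antidiagonalTuple_succ, Fin.sum_univ_succ, Nat.add_choose_eq]
    refine Finset.sum_congr rfl fun p hp => ?_
    rw [← ih (fun i => n i.succ) p.2, Finset.mul_sum]
    refine Finset.sum_congr rfl fun rv _ => ?_
    rw [Fin.prod_univ_succ]
    simp

/-- The "code fidelity" is a universal constant: for any normalized amplitude function on the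
simplex, the truncated amplitude-damping weight sum equals the binomial tail probability. -/
theorem code_fidelity_universal (q N t : ℕ) (hq : 1 ≤ q) (ht : t ≤ N)
    (γ : ℝ) (hγ0 : 0 < γ) (hγ1 : γ ≤ 1)
    (α : (Fin q → ℕ) → ℂ)
    (hα : ∑ n ∈ simplex q N, ‖α n‖ ^ 2 = 1) :
    ∑ r ∈ Finset.range (t + 1), ∑ rv ∈ simplex q r,
        (1 - γ) ^ (N - r) * γ ^ r *
          ∑ n ∈ simplex q N,
            ‖α n‖ ^ 2 * ∏ i, ((n i).choose (rv i) : ℝ)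
      = ∑ r ∈ Finset.range (t + 1), (N.choose r : ℝ) * γ ^ r * (1 - γ) ^ (N - r) := by
  refine Finset.sum_congr rfl fun r _ => ?_
  have key : ∑ rv ∈ simplex q r, ∑ n ∈ simplex q N,
      ‖α n‖ ^ 2 * ∏ i, ((n i).choose (rv i) : ℝ) = (N.choose r : ℝ) := by
    rw [Finset.sum_comm]
    have : ∀ n ∈ simplex q N,
        ∑ rv ∈ simplex q r, ‖α n‖ ^ 2 * ∏ i, ((n i).choose (rv i) : ℝ)
          = ‖α n‖ ^ 2 * (N.choose r : ℝ) := by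
      intro n hn
      rw [← Finset.mul_sum]
      congr 1
      have hsum : ∑ i, n i = N := by
        rwa [simplex, Finset.Nat.mem_antidiagonalTuple] at hn
      rw [show ((N.choose r : ℕ) : ℝ) = (((∑ i, n i).choose r : ℕ) : ℝ) by rw [hsum],
        ← vandermonde_tuple q n r, Nat.cast_sum, simplex]
      exact Finset.sum_congr rfl fun rv _ => by rw [Nat.cast_prod]
    rw [Finset.sum_congr rfl this, ← Finset.sum_mul, hα, one_mul]
  calc ∑ rv ∈ simplex q r, (1 - γ) ^ (N - r) * γ ^ r *
          ∑ n ∈ simplex q N, ‖α n‖ ^ 2 * ∏ i, ((n i).choose (rv i) : ℝ)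
      = (1 - γ) ^ (N - r) * γ ^ r *
          ∑ rv ∈ simplex q r, ∑ n ∈ simplex q N,
            ‖α n‖ ^ 2 * ∏ i, ((n i).choose (rv i) : ℝ) := by
        rw [Finset.mul_sum]
    _ = (N.choose r : ℝ) * γ ^ r * (1 - γ) ^ (N - r) := by rw [key]; ring
end

section
/- Mean absolute value of a symmetric Skellam random variable: Let λ > 0 and let X and Z be independent Poisson(λ) random variables. Then E[|X − Z|] = 2λ·e^{−2λ}·(I₀(2λ) + I₁(2λ)). -/
open scoped BigOperators

/-- The modified Bessel function of the first kind of integer order `k`. -/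
noncomputable def besselI (k : ℕ) (x : ℝ) : ℝ :=
  (1 / Real.pi) * ∫ θ in (0 : ℝ)..Real.pi, Real.exp (x * Real.cos θ) * Real.cos (k * θ)

open Real Finset MeasureTheory intervalIntegral



-- Wallis integrals
lemma W_rec (n : ℕ) : (∫ θ in (0:ℝ)..π, Real.cos θ ^ (n+2))
    = (n+1)/(n+2) * ∫ θ in (0:ℝ)..π, Real.cos θ ^ n := by
  rw [integral_cos_pow]
  simp

lemma W_odd (r : ℕ) : (∫ θ in (0:ℝ)..π, Real.cos θ ^ (2*r+1)) = 0 := by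
  induction r with
  | zero => simp
  | succ r ih =>
    have h : 2*(r+1)+1 = (2*r+1) + 2 := by ring
    rw [h, W_rec, ih, mul_zero]

lemma W_even (r : ℕ) : (∫ θ in (0:ℝ)..π, Real.cos θ ^ (2*r))
    = π * ((2*r).choose r) / 4^r := by
  induction r with
  | zero => simp
  | succ r ih =>
    have h : 2*(r+1) = 2*r + 2 := by ring
    rw [h, W_rec, ih]
    have hc : (r+1) * ((2*r+2).choose (r+1)) = 2 * (2*r+1) * ((2*r).choose r) := by
      have := Nat.succ_mul_centralBinom_succ r
      simpa [Nat.centralBinom, Nat.mul_succ] using this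
    have hc' : ((r:ℝ)+1) * ((2*r+2).choose (r+1)) = 2 * (2*(r:ℝ)+1) * ((2*r).choose r) := by
      exact_mod_cast congrArg (Nat.cast : ℕ → ℝ) hc
    have h2 : 2*(r+1) = 2*r+2 := by ring
    push_cast
    field_simp
    linear_combination (-(2*(4:ℝ)^r)) * hc'



-- telescoping sum
lemma telescope_sum (t K : ℕ) :
    ∑ i ∈ range (K+1), (((t:ℝ)+1) - 2*i) * ((t+1).choose i)
      = ((t:ℝ)+1) * (t.choose K) := by
  induction K with
  | zero => simp
  | succ K ih =>
    rw [Finset.sum_range_succ, ih]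
    have h1 : ((t:ℝ)+1) * (t.choose K) = ((K:ℝ)+1) * ((t+1).choose (K+1)) := by
      have := Nat.add_one_mul_choose_eq t K
      have := congrArg (Nat.cast : ℕ → ℝ) this
      push_cast at this
      linarith [this]
    have h2 : (((t+1).choose (K+1) : ℝ)) = (t.choose K : ℝ) + (t.choose (K+1) : ℝ) := by
      exact_mod_cast congrArg (Nat.cast : ℕ → ℝ) (Nat.choose_succ_succ t K)
    push_cast
    linear_combination 2 * h1 + ((t:ℝ)+1) * h2

-- the absolute-value binomial sum, split at the midpoint
lemma abs_sum_aux (s : ℕ) (hs : 1 ≤ s) :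
    ∑ i ∈ range (s+1), |2*(i:ℝ) - s| * (s.choose i)
      = (s:ℝ) * ((s-1).choose (s/2)) + (s:ℝ) * ((s-1).choose (s - s/2 - 1)) := by
  set h := s / 2 with hh
  have h2s : 2*h ≤ s := by omega
  have hs2 : s < 2*h + 2 := by omega
  -- split range
  have hsplit : ∑ i ∈ range (s+1), |2*(i:ℝ) - s| * (s.choose i)
      = (∑ i ∈ range (h+1), |2*(i:ℝ) - s| * (s.choose i))
        + ∑ i ∈ Ico (h+1) (s+1), |2*(i:ℝ) - s| * (s.choose i) := by
    rw [Finset.range_eq_Ico, ← Finset.sum_Ico_consecutive _ (Nat.zero_le (h+1)) (by omega),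
      ← Finset.range_eq_Ico]
  have htel : ∀ t K : ℕ, t + 1 = s → K ≤ h →
      ∑ i ∈ range (K+1), ((s:ℝ) - 2*i) * (s.choose i) = (s:ℝ) * ((s-1).choose K) := by
    intro t K ht hK
    subst ht
    have := telescope_sum t K
    simpa using this
  obtain ⟨t, ht⟩ : ∃ t, t + 1 = s := ⟨s-1, by omega⟩
  -- first part
  have hfirst : ∑ i ∈ range (h+1), |2*(i:ℝ) - s| * (s.choose i) = (s:ℝ) * ((s-1).choose h) := by
    rw [← htel t h ht le_rfl]
    apply Finset.sum_congr rfl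
    intro i hi
    rw [Finset.mem_range] at hi
    have : 2*(i:ℝ) - s ≤ 0 := by
      have : 2*i ≤ s := by omega
      have := (Nat.cast_le (α := ℝ)).2 this
      push_cast at this ⊢
      linarith
    rw [abs_of_nonpos this]
    ring
  -- second part: reindex i ↦ s - i
  have hsecond : ∑ i ∈ Ico (h+1) (s+1), |2*(i:ℝ) - s| * (s.choose i)
      = (s:ℝ) * ((s-1).choose (s - h - 1)) := by
    rw [show (∑ i ∈ Ico (h+1) (s+1), |2*(i:ℝ) - s| * (s.choose i))
        = ∑ j ∈ range (s - h), ((s:ℝ) - 2*j) * (s.choose j) from ?_]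
    · rcases Nat.eq_zero_or_pos (s - h) with h0 | h0
      · omega
      obtain ⟨K, hK⟩ : ∃ K, K + 1 = s - h := ⟨s - h - 1, by omega⟩
      rw [show s - h - 1 = K by omega, ← hK, htel t K ht (by omega)]
    · refine Finset.sum_nbij' (fun i => s - i) (fun j => s - j) ?_ ?_ ?_ ?_ ?_
      · intro i hi; simp only [Finset.mem_Ico, Finset.mem_range] at *; omega
      · intro j hj; simp only [Finset.mem_Ico, Finset.mem_range] at *; omega
      · intro i hi; simp only [Finset.mem_Ico] at hi; omega
      · intro j hj; simp only [Finset.mem_range] at hj; omega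
      · intro i hi
        simp only [Finset.mem_Ico] at hi
        have hi1 : i ≤ s := by omega
        have hci : s.choose (s - i) = s.choose i := Nat.choose_symm hi1
        have hcast : ((s - i : ℕ) : ℝ) = (s:ℝ) - i := by
          rw [Nat.cast_sub hi1]
        have habs : |2*(i:ℝ) - s| = 2*(i:ℝ) - s := by
          apply abs_of_nonneg
          have h2i : s + 1 ≤ 2*i := by omega
          have := (Nat.cast_le (α := ℝ)).2 h2i
          push_cast at this
          linarith
        rw [habs, hci, hcast]
        ring
  rw [hsplit, hfirst, hsecond]

lemma abs_sum_odd (r : ℕ) :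
    ∑ i ∈ range (2*r+1+1), |2*(i:ℝ) - (2*r+1)| * ((2*r+1).choose i)
      = 2*((2*r:ℝ)+1) * ((2*r).choose r) := by
  have := abs_sum_aux (2*r+1) (by omega)
  have h1 : (2*r+1)/2 = r := by omega
  have h2 : (2*r+1) - 1 = 2*r := by omega
  have h3 : (2*r+1) - r - 1 = r := by omega
  rw [h1, h2, h3] at this
  push_cast at this ⊢
  rw [this]
  ring

lemma abs_sum_even (r : ℕ) :
    ∑ i ∈ range (2*r+2+1), |2*(i:ℝ) - (2*r+2)| * ((2*r+2).choose i)
      = ((2*r:ℝ)+2) * ((2*r+2).choose (r+1)) := by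
  have := abs_sum_aux (2*r+2) (by omega)
  have h1 : (2*r+2)/2 = r+1 := by omega
  have h2 : (2*r+2) - 1 = 2*r+1 := by omega
  have h3 : (2*r+2) - (r+1) - 1 = r := by omega
  rw [h1, h2, h3] at this
  push_cast at this ⊢
  rw [this]
  have hp : (2*r+2).choose (r+1) = (2*r+1).choose r + (2*r+1).choose (r+1) :=
    Nat.choose_succ_succ' (2*r+1) r
  have hp' : ((2*r+2).choose (r+1) : ℝ) = (2*r+1).choose r + (2*r+1).choose (r+1) := by
    exact_mod_cast congrArg (Nat.cast : ℕ → ℝ) hp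
  push_cast at hp' ⊢
  linear_combination (-(2*(r:ℝ)+2)) * hp'



noncomputable def T (s : ℕ) : ℝ :=
  ∑ i ∈ range (s+1), |2*(i:ℝ) - s| / (i.factorial * (s-i).factorial)

lemma T_eq (s : ℕ) : T s = (∑ i ∈ range (s+1), |2*(i:ℝ) - s| * (s.choose i)) / s.factorial := by
  rw [T, Finset.sum_div]
  apply Finset.sum_congr rfl
  intro i hi
  rw [Finset.mem_range] at hi
  have hi1 : i ≤ s := by omega
  have hfac' : ((s.choose i) : ℝ) * i.factorial * (s-i).factorial = s.factorial := by
    exact_mod_cast congrArg (Nat.cast : ℕ → ℝ)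
      (Nat.choose_mul_factorial_mul_factorial hi1)
  have h1 : (i.factorial : ℝ) ≠ 0 := Nat.cast_ne_zero.2 (Nat.factorial_ne_zero i)
  have h2 : ((s-i).factorial : ℝ) ≠ 0 := Nat.cast_ne_zero.2 (Nat.factorial_ne_zero _)
  have h3 : (s.factorial : ℝ) ≠ 0 := Nat.cast_ne_zero.2 (Nat.factorial_ne_zero s)
  field_simp
  linear_combination (-|2*(i:ℝ) - s|) * hfac'

lemma T_odd (r : ℕ) : T (2*r+1) = 2 / ((r.factorial : ℝ))^2 := by
  rw [T_eq]
  have h := abs_sum_odd r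
  have hcn := Nat.choose_mul_factorial_mul_factorial (show r ≤ 2*r by omega)
  rw [show 2*r - r = r by omega] at hcn
  have hc : ((2*r).choose r : ℝ) * r.factorial * r.factorial = (2*r).factorial := by
    exact_mod_cast congrArg (Nat.cast : ℕ → ℝ) hcn
  have hf : ((2*r+1).factorial : ℝ) = (2*(r:ℝ)+1) * (2*r).factorial := by
    rw [Nat.factorial_succ]; push_cast; ring
  have h1 : (r.factorial : ℝ) ≠ 0 := Nat.cast_ne_zero.2 (Nat.factorial_ne_zero r)
  have h3 : ((2*r+1).factorial : ℝ) ≠ 0 := Nat.cast_ne_zero.2 (Nat.factorial_ne_zero _)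
  push_cast at h ⊢
  rw [h]
  field_simp
  linear_combination (2*(r:ℝ)+1) * hc - hf

lemma T_even (r : ℕ) : T (2*r+2) = 2 / ((r.factorial : ℝ) * ((r+1).factorial)) := by
  rw [T_eq]
  have h := abs_sum_even r
  have hcn := Nat.choose_mul_factorial_mul_factorial (show r+1 ≤ 2*r+2 by omega)
  rw [show 2*r+2 - (r+1) = r+1 by omega] at hcn
  have hc : ((2*r+2).choose (r+1) : ℝ) * (r+1).factorial * (r+1).factorial
      = (2*r+2).factorial := by
    exact_mod_cast congrArg (Nat.cast : ℕ → ℝ) hcn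
  have hf : ((r+1).factorial : ℝ) = ((r:ℝ)+1) * r.factorial := by
    rw [Nat.factorial_succ]; push_cast; ring
  have h1 : (r.factorial : ℝ) ≠ 0 := Nat.cast_ne_zero.2 (Nat.factorial_ne_zero r)
  have h2 : ((r+1).factorial : ℝ) ≠ 0 := Nat.cast_ne_zero.2 (Nat.factorial_ne_zero _)
  have h3 : ((2*r+2).factorial : ℝ) ≠ 0 := Nat.cast_ne_zero.2 (Nat.factorial_ne_zero _)
  push_cast at h ⊢
  rw [h]
  field_simp
  linear_combination hc - (((2*r+2).choose (r+1) : ℕ) : ℝ) * (((r+1).factorial : ℕ) : ℝ) * hf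




lemma integral_exp_cos (x : ℝ) (k : ℕ) :
    (∫ θ in (0:ℝ)..π, Real.exp (x * Real.cos θ) * Real.cos (k*θ))
    = ∑' j : ℕ, x^j / j.factorial * ∫ θ in (0:ℝ)..π, Real.cos θ ^ j * Real.cos (k*θ) := by
  have hle : (0:ℝ) ≤ π := pi_pos.le
  set μ := volume.restrict (Set.Ioc (0:ℝ) π) with hμ
  set F : ℕ → ℝ → ℝ := fun j θ => x^j / j.factorial * (Real.cos θ ^ j * Real.cos (k*θ)) with hF
  have hpt : ∀ θ : ℝ, Real.exp (x * Real.cos θ) * Real.cos (k*θ) = ∑' j, F j θ := by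
    intro θ
    have he : Real.exp (x * Real.cos θ) = ∑' j : ℕ, (x * Real.cos θ)^j / j.factorial := by
      rw [Real.exp_eq_exp_ℝ, NormedSpace.exp_eq_tsum_div]
    rw [he, ← tsum_mul_right]
    apply tsum_congr
    intro j
    simp only [hF, mul_pow]
    ring
  have hcont : ∀ j, Continuous (F j) := by
    intro j
    apply Continuous.mul continuous_const
    exact (Real.continuous_cos.pow j).mul
      (Real.continuous_cos.comp (continuous_const.mul continuous_id))
  have hint : ∀ j, Integrable (F j) μ := fun j => (hcont j).integrableOn_Ioc
  have hbound : ∀ j θ, ‖F j θ‖ ≤ |x|^j / j.factorial := by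
    intro j θ
    have h1 : |Real.cos θ ^ j * Real.cos (k*θ)| ≤ 1 := by
      rw [abs_mul, abs_pow]
      have hp : |Real.cos θ|^j ≤ 1 := pow_le_one₀ (abs_nonneg _) (Real.abs_cos_le_one θ)
      nlinarith [Real.abs_cos_le_one (k*θ), abs_nonneg (Real.cos (k*θ)),
        pow_nonneg (abs_nonneg (Real.cos θ)) j]
    have h2 : ‖F j θ‖ = |x|^j / j.factorial * |Real.cos θ ^ j * Real.cos (k*θ)| := by
      simp only [hF, Real.norm_eq_abs, abs_mul, abs_div, abs_pow, Nat.abs_cast]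
    rw [h2]
    have h3 : 0 ≤ |x|^j / (j.factorial:ℝ) := by positivity
    nlinarith [abs_nonneg (Real.cos θ ^ j * Real.cos (k*θ))]
  have hsum : Summable fun j => ∫ θ, ‖F j θ‖ ∂μ := by
    refine Summable.of_nonneg_of_le
      (fun j => integral_nonneg (fun θ => norm_nonneg _)) (fun j => ?_)
      ((Real.summable_pow_div_factorial |x|).mul_left π)
    calc ∫ θ, ‖F j θ‖ ∂μ ≤ ∫ _θ, |x|^j / j.factorial ∂μ :=
          integral_mono (hint j).norm (integrable_const _) (hbound j)
      _ = π * (|x|^j / j.factorial) := by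
          rw [hμ, setIntegral_const, Real.volume_real_Ioc_of_le hle, smul_eq_mul, sub_zero]
  calc (∫ θ in (0:ℝ)..π, Real.exp (x * Real.cos θ) * Real.cos (k*θ))
      = ∫ θ, (∑' j, F j θ) ∂μ := by
        rw [intervalIntegral.integral_of_le hle]
        exact setIntegral_congr_fun measurableSet_Ioc (fun θ _ => hpt θ)
    _ = ∑' j, ∫ θ, F j θ ∂μ := (integral_tsum_of_summable_integral_norm hint hsum).symm
    _ = ∑' j : ℕ, x^j / j.factorial * ∫ θ in (0:ℝ)..π, Real.cos θ ^ j * Real.cos (k*θ) := by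
        apply tsum_congr
        intro j
        rw [intervalIntegral.integral_of_le hle]
        simp only [hF]
        exact MeasureTheory.integral_const_mul _ _

lemma sq_fact_le (r : ℕ) : ((r.factorial : ℝ)) ≤ ((r.factorial : ℝ))^2 := by
  have h1 : (1:ℝ) ≤ r.factorial := by exact_mod_cast r.factorial_pos
  nlinarith

lemma summable_a (x : ℝ) : Summable (fun r : ℕ => (x^2)^r / ((r.factorial:ℝ))^2) := by
  refine Summable.of_nonneg_of_le (fun r => by positivity) (fun r => ?_)
    (Real.summable_pow_div_factorial (x^2))
  exact div_le_div_of_nonneg_left (by positivity) (by positivity) (sq_fact_le r)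

lemma summable_b (x : ℝ) :
    Summable (fun r : ℕ => x * (x^2)^r / ((r.factorial:ℝ) * ((r+1).factorial))) := by
  apply Summable.of_norm
  have hg : Summable (fun r : ℕ => |x| * (x^2)^r / ((r.factorial:ℝ))) := by
    have := (Real.summable_pow_div_factorial (x^2)).mul_left |x|
    refine this.congr (fun r => ?_)
    rw [mul_div_assoc]
  refine Summable.of_nonneg_of_le (fun r => norm_nonneg _) (fun r => ?_) hg
  have h1 : (1:ℝ) ≤ ((r+1).factorial : ℝ) := by exact_mod_cast (r+1).factorial_pos
  have h2 : (0:ℝ) < (r.factorial:ℝ) := by exact_mod_cast r.factorial_pos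
  have hnorm : ‖x * (x^2)^r / ((r.factorial:ℝ) * ((r+1).factorial))‖
      = |x| * (x^2)^r / ((r.factorial:ℝ) * ((r+1).factorial)) := by
    rw [Real.norm_eq_abs, abs_div, abs_mul, abs_mul]
    congr 1
    · congr 1; exact abs_of_nonneg (by positivity)
    · rw [abs_of_pos h2, abs_of_pos (by positivity)]
  rw [hnorm]
  apply div_le_div_of_nonneg_left (by positivity) h2
  exact le_mul_of_one_le_right h2.le h1

lemma besselI0_series (x : ℝ) :
    besselI 0 (2*x) = ∑' r : ℕ, (x^2)^r / ((r.factorial:ℝ))^2 := by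
  rw [besselI, integral_exp_cos (2*x) 0]
  set f : ℕ → ℝ := fun j => (2*x)^j / j.factorial
    * ∫ θ in (0:ℝ)..π, Real.cos θ ^ j * Real.cos (((0:ℕ):ℝ)*θ) with hf
  have hW : ∀ j, (∫ θ in (0:ℝ)..π, Real.cos θ ^ j * Real.cos (((0:ℕ):ℝ)*θ))
      = ∫ θ in (0:ℝ)..π, Real.cos θ ^ j := by
    intro j
    apply intervalIntegral.integral_congr
    intro θ _
    simp
  have he : ∀ r, f (2*r) = π * ((x^2)^r / ((r.factorial:ℝ))^2) := by
    intro r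
    have hcn := Nat.choose_mul_factorial_mul_factorial (show r ≤ 2*r by omega)
    rw [show 2*r - r = r by omega] at hcn
    have hc : ((2*r).choose r : ℝ) * r.factorial * r.factorial = (2*r).factorial := by
      exact_mod_cast congrArg (Nat.cast : ℕ → ℝ) hcn
    simp only [hf, hW, W_even]
    have hpow : (2*x)^(2*r) = 4^r * (x^2)^r := by
      rw [pow_mul, show (2*x)^2 = 4*x^2 by ring, mul_pow]
    rw [hpow]
    have h1 : ((2*r).factorial : ℝ) ≠ 0 := Nat.cast_ne_zero.2 (Nat.factorial_ne_zero _)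
    have h2 : (r.factorial : ℝ) ≠ 0 := Nat.cast_ne_zero.2 (Nat.factorial_ne_zero _)
    have h4 : ((4:ℝ))^r ≠ 0 := by positivity
    field_simp
    linear_combination ((x^2)^r) * hc
  have ho : ∀ r, f (2*r+1) = 0 := by
    intro r
    simp only [hf, hW, W_odd, mul_zero]
  have hS : Summable (fun r => f (2*r)) :=
    (summable_congr he).2 ((summable_a x).mul_left π)
  have hO : Summable (fun r => f (2*r+1)) :=
    (summable_congr ho).2 summable_zero
  rw [← tsum_even_add_odd hS hO, tsum_congr he, tsum_congr ho, tsum_zero, add_zero,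
    tsum_mul_left, ← mul_assoc, one_div, inv_mul_cancel₀ pi_ne_zero, one_mul]

lemma besselI1_series (x : ℝ) :
    besselI 1 (2*x) = ∑' r : ℕ, x * (x^2)^r / ((r.factorial:ℝ) * ((r+1).factorial)) := by
  rw [besselI, integral_exp_cos (2*x) 1]
  set f : ℕ → ℝ := fun j => (2*x)^j / j.factorial
    * ∫ θ in (0:ℝ)..π, Real.cos θ ^ j * Real.cos (((1:ℕ):ℝ)*θ) with hf
  have hW : ∀ j, (∫ θ in (0:ℝ)..π, Real.cos θ ^ j * Real.cos (((1:ℕ):ℝ)*θ))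
      = ∫ θ in (0:ℝ)..π, Real.cos θ ^ (j+1) := by
    intro j
    apply intervalIntegral.integral_congr
    intro θ _
    simp [pow_succ]
  have ho : ∀ r, f (2*r) = 0 := by
    intro r
    simp only [hf, hW, W_odd, mul_zero]
  have he : ∀ r, f (2*r+1) = π * (x * (x^2)^r / ((r.factorial:ℝ) * ((r+1).factorial))) := by
    intro r
    have hcn := Nat.choose_mul_factorial_mul_factorial (show r+1 ≤ 2*(r+1) by omega)
    rw [show 2*(r+1) - (r+1) = r+1 by omega] at hcn
    have hc : ((2*(r+1)).choose (r+1) : ℝ) * (r+1).factorial * (r+1).factorial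
        = (2*(r+1)).factorial := by
      exact_mod_cast congrArg (Nat.cast : ℕ → ℝ) hcn
    have hf1 : ((r+1).factorial : ℝ) = ((r:ℝ)+1) * r.factorial := by
      rw [Nat.factorial_succ]; push_cast; ring
    have hf2 : ((2*(r+1)).factorial : ℝ) = (2*(r:ℝ)+2) * (2*r+1).factorial := by
      rw [show 2*(r+1) = (2*r+1)+1 by ring, Nat.factorial_succ]; push_cast; ring
    simp only [hf, hW]
    rw [show 2*r+1+1 = 2*(r+1) by ring, W_even]
    have hpow : (2*x)^(2*r+1) = 2 * x * (4^r * (x^2)^r) := by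
      rw [pow_succ, pow_mul, show (2*x)^2 = 4*x^2 by ring, mul_pow]
      ring
    rw [hpow]
    have h1 : ((2*r+1).factorial : ℝ) ≠ 0 := Nat.cast_ne_zero.2 (Nat.factorial_ne_zero _)
    have h2 : (r.factorial : ℝ) ≠ 0 := Nat.cast_ne_zero.2 (Nat.factorial_ne_zero _)
    have h3 : ((r+1).factorial : ℝ) ≠ 0 := Nat.cast_ne_zero.2 (Nat.factorial_ne_zero _)
    have h4 : ((4:ℝ))^r ≠ 0 := by positivity
    have hr1 : ((r:ℝ)+1) ≠ 0 := by positivity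
    have key : ((2*(r+1)).choose (r+1):ℝ) * r.factorial * (r+1).factorial
        = 2 * (2*r+1).factorial := by
      apply mul_left_cancel₀ hr1
      linear_combination hc - (((2*(r+1)).choose (r+1):ℝ) * ((r+1).factorial:ℝ)) * hf1 + hf2
    field_simp
    linear_combination (2*x*(x^2)^r*(4:ℝ)^r) * key
  have hS : Summable (fun r => f (2*r)) := (summable_congr ho).2 summable_zero
  have hO : Summable (fun r => f (2*r+1)) :=
    (summable_congr he).2 ((summable_b x).mul_left π)
  rw [← tsum_even_add_odd hS hO, tsum_congr he, tsum_congr ho, tsum_zero, zero_add,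
    tsum_mul_left, ← mul_assoc, one_div, inv_mul_cancel₀ pi_ne_zero, one_mul]





set_option maxHeartbeats 1000000 in
/-- The mean absolute value of a symmetric Skellam random variable: if `X, Z` are
independent `Poisson(λ)`, then `E[|X - Z|] = 2 λ e^{-2λ} (I₀(2λ) + I₁(2λ))`.
The expectation is written as the sum over the joint (product) distribution. -/
theorem skellam_mean_abs (lam : ℝ) (hlam : 0 < lam) :
    ∑' p : ℕ × ℕ,
        (Real.exp (-lam) * lam ^ p.1 / (p.1.factorial : ℝ)) *
          (Real.exp (-lam) * lam ^ p.2 / (p.2.factorial : ℝ)) *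
            |(p.1 : ℝ) - (p.2 : ℝ)|
      = 2 * lam * Real.exp (-2 * lam) * (besselI 0 (2 * lam) + besselI 1 (2 * lam)) := by
  set E := Real.exp (-lam) with hE
  have hEpos : 0 < E := Real.exp_pos _
  set a : ℕ → ℝ := fun n => E * lam ^ n / n.factorial with ha
  set f : ℕ × ℕ → ℝ := fun p => a p.1 * a p.2 * |(p.1 : ℝ) - (p.2 : ℝ)| with hfdef
  have hapos : ∀ n, 0 < a n := fun n => by
    have : (0:ℝ) < n.factorial := by exact_mod_cast n.factorial_pos
    positivity
  -- summability of f
  have hsa : Summable a := by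
    have := (Real.summable_pow_div_factorial lam).mul_left E
    exact this.congr fun n => by simp only [ha, mul_div_assoc]
  have hsu : Summable (fun n : ℕ => (n:ℝ) * a n) := by
    apply (summable_nat_add_iff 1).1
    have := (Real.summable_pow_div_factorial lam).mul_left (E * lam)
    refine this.congr fun n => ?_
    have hfa : ((n+1).factorial : ℝ) = ((n:ℝ)+1) * n.factorial := by
      rw [Nat.factorial_succ]; push_cast; ring
    have h2 : (n.factorial : ℝ) ≠ 0 := Nat.cast_ne_zero.2 (Nat.factorial_ne_zero _)
    simp only [ha, hfa]
    push_cast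
    field_simp
    ring
  have hfs : Summable f := by
    have hg1 : Summable (fun p : ℕ × ℕ => ((p.1:ℝ) * a p.1) * a p.2) :=
      Summable.mul_of_nonneg hsu hsa
        (fun n => mul_nonneg (Nat.cast_nonneg n) (hapos n).le) (fun n => (hapos n).le)
    have hg2 : Summable (fun p : ℕ × ℕ => a p.1 * ((p.2:ℝ) * a p.2)) :=
      Summable.mul_of_nonneg hsa hsu
        (fun n => (hapos n).le) (fun n => mul_nonneg (Nat.cast_nonneg n) (hapos n).le)
    have hg : Summable (fun p : ℕ × ℕ =>
        ((p.1:ℝ) * a p.1) * a p.2 + a p.1 * ((p.2:ℝ) * a p.2)) := hg1.add hg2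
    refine Summable.of_nonneg_of_le (fun p => by positivity) (fun p => ?_) hg
    have habs : |(p.1 : ℝ) - (p.2 : ℝ)| ≤ (p.1:ℝ) + (p.2:ℝ) := by
      have := abs_sub (p.1:ℝ) (p.2:ℝ)
      simp only [abs_of_nonneg (Nat.cast_nonneg _ : (0:ℝ) ≤ p.1),
        abs_of_nonneg (Nat.cast_nonneg _ : (0:ℝ) ≤ p.2)] at this
      exact this
    have h1 := (hapos p.1).le
    have h2 := (hapos p.2).le
    have h3 : 0 ≤ a p.1 * a p.2 := mul_nonneg h1 h2
    calc f p = a p.1 * a p.2 * |(p.1 : ℝ) - (p.2 : ℝ)| := rfl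
      _ ≤ a p.1 * a p.2 * ((p.1:ℝ) + (p.2:ℝ)) := by
          exact mul_le_mul_of_nonneg_left habs h3
      _ = ((p.1:ℝ) * a p.1) * a p.2 + a p.1 * ((p.2:ℝ) * a p.2) := by ring
  -- reindex by antidiagonals
  have hreindex : ∑' p : ℕ × ℕ, f p = ∑' s : ℕ, ∑ p ∈ antidiagonal s, f p := by
    rw [← Finset.HasAntidiagonal.sigmaAntidiagonalEquivProd.tsum_eq f]
    conv_rhs => congr; ext; rw [← Finset.sum_finset_coe, ← tsum_fintype (L := .unconditional _)]
    exact Summable.tsum_sigma' (fun n => (hasSum_fintype _).summable)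
      (Finset.HasAntidiagonal.sigmaAntidiagonalEquivProd.summable_iff.2 hfs)
  -- inner sums
  have hinner : ∀ s : ℕ, ∑ p ∈ antidiagonal s, f p = E^2 * lam^s * T s := by
    intro s
    rw [Finset.Nat.sum_antidiagonal_eq_sum_range_succ_mk, T, Finset.mul_sum]
    apply Finset.sum_congr rfl
    intro i hi
    rw [Finset.mem_range] at hi
    have hi1 : i ≤ s := by omega
    have hcast : ((s - i : ℕ) : ℝ) = (s:ℝ) - i := by rw [Nat.cast_sub hi1]
    have hl : lam ^ i * lam ^ (s - i) = lam ^ s := by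
      rw [← pow_add, Nat.add_sub_cancel' hi1]
    have habs2 : |(i:ℝ) - ((s - i : ℕ) : ℝ)| = |2*(i:ℝ) - s| := by
      rw [hcast]; congr 1; ring
    have h1 : (i.factorial : ℝ) ≠ 0 := Nat.cast_ne_zero.2 (Nat.factorial_ne_zero _)
    have h2 : ((s-i).factorial : ℝ) ≠ 0 := Nat.cast_ne_zero.2 (Nat.factorial_ne_zero _)
    simp only [hfdef, ha, habs2]
    have key : E * lam ^ i / i.factorial * (E * lam ^ (s-i) / (s-i).factorial)
        = E^2 * lam^s / ((i.factorial:ℝ) * (s-i).factorial) := by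
      rw [div_mul_div_comm]
      congr 1
      rw [← hl]
      ring
    rw [key]
    ring
  -- assemble series
  have hT0 : T 0 = 0 := by simp [T]
  set g : ℕ → ℝ := fun s => E^2 * lam^s * T s with hgdef
  have hgo : ∀ r, g (2*r+1) = (2*lam*E^2) * ((lam^2)^r / ((r.factorial:ℝ))^2) := by
    intro r
    have hp : lam^(2*r+1) = lam * (lam^2)^r := by rw [pow_succ, pow_mul]; ring
    simp only [hgdef, T_odd, hp]
    ring
  have hge : ∀ r, g (2*(r+1)) = (2*lam*E^2) * (lam * (lam^2)^r / ((r.factorial:ℝ) * ((r+1).factorial))) := by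
    intro r
    rw [show 2*(r+1) = 2*r+2 by ring]
    have hp : lam^(2*r+2) = lam * (lam * (lam^2)^r) := by
      rw [show 2*r+2 = 2*r+1+1 by ring, pow_succ, pow_succ, pow_mul]
      ring
    simp only [hgdef, T_even, hp]
    ring
  have hg0 : g 0 = 0 := by simp [hgdef, hT0]
  have hSo : Summable (fun r => g (2*r+1)) :=
    (summable_congr hgo).2 ((summable_a lam).mul_left _)
  have hSe1 : Summable (fun r => g (2*(r+1))) :=
    (summable_congr hge).2 ((summable_b lam).mul_left _)
  have hSe : Summable (fun r => g (2*r)) := by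
    apply (summable_nat_add_iff 1).1
    exact hSe1.congr fun r => by rw [show 2*(r+1) = 2*r+1+1 by ring]
  calc ∑' p : ℕ × ℕ, f p = ∑' s, g s := by
        rw [hreindex]; exact tsum_congr hinner
    _ = (∑' r, g (2*r)) + ∑' r, g (2*r+1) := (tsum_even_add_odd hSe hSo).symm
    _ = (∑' r, g (2*(r+1))) + ∑' r, g (2*r+1) := by
        congr 1
        rw [Summable.tsum_eq_zero_add hSe]
        have h0 : g (2*0) = 0 := by simpa using hg0
        rw [h0, zero_add]
    _ = 2 * lam * Real.exp (-2 * lam) * (besselI 0 (2 * lam) + besselI 1 (2 * lam)) := by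
        rw [tsum_congr hge, tsum_congr hgo, tsum_mul_left, tsum_mul_left,
          besselI0_series lam, besselI1_series lam]
        have hE2 : Real.exp (-2 * lam) = E^2 := by
          rw [hE, sq, ← Real.exp_add]; ring_nf
        rw [hE2]
        ring
end

section
/- Poisson upper tail at sublogarithmic threshold: Fix reals λ > 0 and ε > 0, and let X be a Poisson(λ) random variable. Then N · P[X ≥ (1+ε)·(ln N)/(ln ln N)] → 0 as N → ∞ (N ranging over integers ≥ 3). -/
open scoped BigOperators Classical

open Filter

private lemma pow_le_exp_mul_factorial (n : ℕ) : (n:ℝ)^n ≤ Real.exp n * n.factorial := by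
  have h : Real.exp (n:ℝ) = ∑' m:ℕ, (n:ℝ)^m / m.factorial := by
    rw [Real.exp_eq_exp_ℝ, NormedSpace.exp_eq_tsum_div]
  have h2 : (n:ℝ)^n / n.factorial ≤ Real.exp n := by
    rw [h]
    exact Summable.le_tsum (Real.summable_pow_div_factorial _) n (fun m _ => by positivity)
  rw [div_le_iff₀ (by positivity)] at h2
  linarith

private lemma geom_bound (lam : ℝ) (hlam : 0 < lam) (k : ℕ) (hk : 2*lam ≤ (k:ℝ)+1) :
    ∀ j : ℕ, lam^(k+j) / ((k+j).factorial : ℝ) ≤ lam^k / k.factorial * (1/2)^j := by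
  intro j
  induction j with
  | zero => simp
  | succ j ih =>
    have hfac : (((k+(j+1)).factorial : ℕ) : ℝ) = ((k:ℝ)+j+1) * ((k+j).factorial : ℝ) := by
      have : k+(j+1) = (k+j)+1 := by ring
      rw [this, Nat.factorial_succ]
      push_cast; ring
    have hd : (0:ℝ) < (k:ℝ)+j+1 := by positivity
    have h1 : lam / ((k:ℝ)+j+1) ≤ 1/2 := by
      rw [div_le_div_iff₀ hd (by norm_num)]
      have : (0:ℝ) ≤ (j:ℝ) := Nat.cast_nonneg j
      linarith
    have hfp : (0:ℝ) < ((k+j).factorial : ℝ) := by positivity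
    calc lam^(k+(j+1)) / (((k+(j+1)).factorial : ℕ) : ℝ)
        = (lam / ((k:ℝ)+j+1)) * (lam^(k+j) / ((k+j).factorial : ℝ)) := by
          rw [hfac, show k+(j+1) = (k+j)+1 from by ring, pow_succ]
          field_simp
      _ ≤ (1/2) * (lam^k / k.factorial * (1/2)^j) := by
          apply mul_le_mul h1 ih (by positivity) (by norm_num)
      _ = lam^k / k.factorial * (1/2)^(j+1) := by ring

private lemma tendsto_div_log_atTop : Tendsto (fun x : ℝ => x / Real.log x) atTop atTop := by
  have h0 : Tendsto (fun x : ℝ => Real.log x / x) atTop (nhdsWithin 0 (Set.Ioi 0)) := by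
    rw [tendsto_nhdsWithin_iff]
    refine ⟨Real.isLittleO_log_id_atTop.tendsto_div_nhds_zero, ?_⟩
    filter_upwards [eventually_gt_atTop 1] with x hx
    exact div_pos (Real.log_pos hx) (by linarith)
  refine h0.inv_tendsto_nhdsGT_zero.congr (fun x => ?_)
  simp [Pi.inv_apply, inv_div]

private lemma eventually_log_add_le (C d : ℝ) (hd : 0 < d) :
    ∀ᶠ x : ℝ in atTop, Real.log x + C ≤ d * x := by
  have h := Real.isLittleO_log_id_atTop.def (half_pos hd)
  filter_upwards [h, eventually_ge_atTop (2*C/d), eventually_ge_atTop 0] with x h1 h2 h3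
  have hx : |Real.log x| ≤ d/2 * |x| := by simpa [Real.norm_eq_abs] using h1
  rw [abs_of_nonneg h3] at hx
  have hl : Real.log x ≤ d/2 * x := le_trans (le_abs_self _) hx
  have h4 : 2*C/d * d ≤ x * d := mul_le_mul_of_nonneg_right h2 hd.le
  rw [div_mul_cancel₀ _ hd.ne'] at h4
  nlinarith


/-- Poisson upper tail at sublogarithmic threshold: for a `Poisson(λ)` random variable `X`,
`N · P[X ≥ (1+ε) ln N / ln ln N] → 0` as `N → ∞`. The tail probability is written as
the sum of the Poisson point probabilities `e^{-λ} λ^n / n!` over the tail. -/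
theorem poisson_tail_sublog (lam ε : ℝ) (hlam : 0 < lam) (hε : 0 < ε) :
    Filter.Tendsto
      (fun N : ℕ =>
        (N : ℝ) *
          ∑' n : ℕ,
            if (1 + ε) * Real.log N / Real.log (Real.log N) ≤ (n : ℝ) then
              Real.exp (-lam) * lam ^ n / (n.factorial : ℝ)
            else 0)
      Filter.atTop (nhds 0) := by
  set p : ℕ → ℝ := fun n => Real.exp (-lam) * lam ^ n / (n.factorial : ℝ) with hp
  have hpsum : Summable p := by
    simpa [hp, mul_div_assoc] using (Real.summable_pow_div_factorial lam).mul_left (Real.exp (-lam))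
  have hpnn : ∀ n, 0 ≤ p n := fun n => by positivity
  set t : ℕ → ℝ := fun N => (1 + ε) * Real.log N / Real.log (Real.log N) with ht
  set k : ℕ → ℕ := fun N => ⌈t N⌉₊ with hk
  show Tendsto (fun N : ℕ => (N : ℝ) * ∑' n : ℕ, if t N ≤ (n:ℝ) then p n else 0) atTop (nhds 0)
  -- the bound function
  have hd : (0:ℝ) < ε/(2+2*ε) := by positivity
  set C : ℝ := Real.log lam + 1 - Real.log (1+ε) with hC
  -- tendsto facts
  have hlogN : Tendsto (fun N : ℕ => Real.log N) atTop atTop :=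
    Real.tendsto_log_atTop.comp tendsto_natCast_atTop_atTop
  have hLL : Tendsto (fun N : ℕ => Real.log (Real.log N)) atTop atTop :=
    Real.tendsto_log_atTop.comp hlogN
  have hLt : Tendsto t atTop atTop := by
    have h1 : Tendsto (fun N : ℕ => Real.log N / Real.log (Real.log N)) atTop atTop :=
      tendsto_div_log_atTop.comp hlogN
    have := h1.const_mul_atTop (show (0:ℝ) < 1+ε by linarith)
    refine this.congr (fun N => ?_)
    rw [ht]; ring
  -- squeeze
  apply squeeze_zero' (g := fun N : ℕ => 2 * Real.exp (-(ε/2) * Real.log N))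
  · filter_upwards with N
    have : 0 ≤ ∑' n : ℕ, (if t N ≤ (n:ℝ) then p n else 0) := by
      apply tsum_nonneg
      intro n
      split
      · exact hpnn n
      · exact le_refl _
    positivity
  · filter_upwards [hLL.eventually (eventually_log_add_le C (ε/(2+2*ε)) hd),
      hLt.eventually_ge_atTop (2*lam),
      hlogN.eventually_gt_atTop 1, eventually_ge_atTop 1] with N h2 h3 hL hN1
    set L : ℝ := Real.log N with hLdef
    set A : ℝ := Real.log L with hA
    have hLpos : (0:ℝ) < L := by linarith
    have hApos : (0:ℝ) < A := Real.log_pos hL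
    have ht0 : 0 < t N := by
      rw [ht]; positivity
    have hkt : t N ≤ (k N : ℝ) := Nat.le_ceil _
    have hkpos : 0 < k N := Nat.ceil_pos.mpr ht0
    have hKpos : (0:ℝ) < (k N : ℝ) := by exact_mod_cast hkpos
    have hgeom : 2*lam ≤ (k N : ℝ) + 1 := by linarith
    -- tail bound
    set g : ℕ → ℝ := fun n => if k N ≤ n then p n else 0 with hg
    have hgle : ∀ n, g n ≤ p n := fun n => by
      show (if k N ≤ n then p n else 0) ≤ p n
      split; exacts [le_refl _, hpnn n]
    have hgnn : ∀ n, 0 ≤ g n := fun n => by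
      show 0 ≤ (if k N ≤ n then p n else 0)
      split; exacts [hpnn n, le_refl _]
    have hgsum : Summable g := Summable.of_nonneg_of_le hgnn hgle hpsum
    have step1 : (∑' n : ℕ, (if t N ≤ (n:ℝ) then p n else 0)) = ∑' n, g n := by
      refine tsum_congr (fun n => ?_)
      simp only [hg]
      by_cases h : t N ≤ (n:ℝ)
      · rw [if_pos h, if_pos (Nat.ceil_le.mpr h)]
      · rw [if_neg h, if_neg (fun hc => h (Nat.ceil_le.mp hc))]
    have step2 : (∑' n, g n) = ∑' i, p (k N + i) := by
      rw [← Summable.sum_add_tsum_nat_add (k N) hgsum]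
      have hz : (∑ i ∈ Finset.range (k N), g i) = 0 := by
        apply Finset.sum_eq_zero
        intro i hi
        rw [Finset.mem_range] at hi
        show (if k N ≤ i then p i else 0) = 0
        rw [if_neg (by omega)]
      rw [hz, zero_add]
      refine tsum_congr (fun i => ?_)
      show (if k N ≤ i + k N then p (i + k N) else 0) = p (k N + i)
      rw [if_pos (by omega), add_comm]
    have step3 : (∑' i, p (k N + i)) ≤ 2 * (Real.exp (-lam) * lam ^ (k N) / ((k N).factorial : ℝ)) := by
      have hb : ∀ i, p (k N + i) ≤
          (Real.exp (-lam) * lam ^ (k N) / ((k N).factorial : ℝ)) * (1/2)^i := by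
        intro i
        have := geom_bound lam hlam (k N) hgeom i
        have hexp : (0:ℝ) ≤ Real.exp (-lam) := (Real.exp_pos _).le
        calc p (k N + i) = Real.exp (-lam) * (lam ^ (k N + i) / ((k N + i).factorial : ℝ)) := by
              rw [hp]; ring
          _ ≤ Real.exp (-lam) * (lam ^ (k N) / ((k N).factorial : ℝ) * (1/2)^i) :=
              mul_le_mul_of_nonneg_left this hexp
          _ = (Real.exp (-lam) * lam ^ (k N) / ((k N).factorial : ℝ)) * (1/2)^i := by ring
      have hsum2 : Summable (fun i : ℕ => (Real.exp (-lam) * lam ^ (k N) / ((k N).factorial : ℝ)) * (1/2)^i) :=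
        (summable_geometric_of_lt_one (by norm_num) (by norm_num)).mul_left _
      calc (∑' i, p (k N + i)) ≤ ∑' i, (Real.exp (-lam) * lam ^ (k N) / ((k N).factorial : ℝ)) * (1/2)^i :=
            Summable.tsum_le_tsum hb ((summable_nat_add_iff (k N)).mpr hpsum |>.congr (fun i => by rw [add_comm])) hsum2
        _ = (Real.exp (-lam) * lam ^ (k N) / ((k N).factorial : ℝ)) * (1-1/2)⁻¹ := by
            rw [tsum_mul_left, tsum_geometric_of_lt_one (by norm_num) (by norm_num)]
        _ = 2 * (Real.exp (-lam) * lam ^ (k N) / ((k N).factorial : ℝ)) := by norm_num [mul_comm]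
    -- key exponent inequality
    set K : ℝ := (k N : ℝ) with hK
    have htN : t N = (1+ε) * L / A := rfl
    have hlogt : Real.log (t N) = Real.log (1+ε) + A - Real.log A := by
      rw [htN, Real.log_div (by positivity) (ne_of_gt hApos),
        Real.log_mul (by positivity) (ne_of_gt hLpos), ← hA]
    have hlogk : Real.log (t N) ≤ Real.log K := Real.log_le_log ht0 hkt
    have hDlb : A - Real.log A - C ≤ Real.log K - Real.log lam - 1 := by
      rw [hC]; linarith [hlogk, hlogt.ge, hlogt.le]
    have hAlb : (1 - ε/(2+2*ε)) * A ≤ A - Real.log A - C := by linarith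
    have hDnn : (0:ℝ) ≤ Real.log K - Real.log lam - 1 := by
      have : (0:ℝ) ≤ (1 - ε/(2+2*ε)) * A := by
        apply mul_nonneg _ hApos.le
        rw [sub_nonneg, div_le_one (by linarith)]; linarith
      linarith
    have hkey : (1 + ε/2) * L ≤ K * (Real.log K - Real.log lam - 1) := by
      have h5 : t N * (Real.log K - Real.log lam - 1) ≤ K * (Real.log K - Real.log lam - 1) :=
        mul_le_mul_of_nonneg_right hkt hDnn
      have h6 : t N * ((1 - ε/(2+2*ε)) * A) ≤ t N * (Real.log K - Real.log lam - 1) :=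
        mul_le_mul_of_nonneg_left (le_trans hAlb hDlb) ht0.le
      have h7 : t N * ((1 - ε/(2+2*ε)) * A) = (1+ε) * (1 - ε/(2+2*ε)) * L := by
        rw [htN]
        field_simp
      have h8 : (1+ε) * (1 - ε/(2+2*ε)) = 1 + ε/2 := by
        field_simp; ring
      calc (1 + ε/2) * L = t N * ((1 - ε/(2+2*ε)) * A) := by rw [h7, h8]
        _ ≤ K * (Real.log K - Real.log lam - 1) := le_trans h6 h5
    -- assemble
    have hNval : (N:ℝ) = Real.exp L := by
      rw [hLdef, Real.exp_log (by exact_mod_cast hN1 : (0:ℝ) < N)]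
    have hfact : lam ^ (k N) / ((k N).factorial : ℝ) ≤
        Real.exp (K * (Real.log lam + 1 - Real.log K)) := by
      have h9 : Real.exp (Real.log lam + 1 - Real.log K) = lam * Real.exp 1 / K := by
        rw [Real.exp_sub, Real.exp_add, Real.exp_log hlam, Real.exp_log hKpos]
      have h10 : Real.exp (K * (Real.log lam + 1 - Real.log K)) = (lam * Real.exp 1 / K) ^ (k N) := by
        rw [hK, Real.exp_nat_mul, h9]
      rw [h10]
      have h11 : (lam * Real.exp 1 / K) ^ (k N) = lam ^ (k N) * Real.exp (k N) / K ^ (k N) := by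
        rw [div_pow, mul_pow, ← Real.exp_nat_mul, mul_one]
      rw [h11, div_le_div_iff₀ (by positivity) (by positivity)]
      have h12 := pow_le_exp_mul_factorial (k N)
      calc lam ^ (k N) * K ^ (k N) = lam ^ (k N) * (K ^ (k N)) := by ring
        _ ≤ lam ^ (k N) * (Real.exp (k N) * ((k N).factorial : ℝ)) := by
            apply mul_le_mul_of_nonneg_left _ (by positivity)
            rw [hK]; exact_mod_cast h12
        _ = lam ^ (k N) * Real.exp (k N) * ((k N).factorial : ℝ) := by ring
    have hexpo : L + K * (Real.log lam + 1 - Real.log K) ≤ -(ε/2) * L := by nlinarith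
    calc (N : ℝ) * ∑' n : ℕ, (if t N ≤ (n:ℝ) then p n else 0)
        ≤ (N : ℝ) * (2 * (Real.exp (-lam) * lam ^ (k N) / ((k N).factorial : ℝ))) := by
          apply mul_le_mul_of_nonneg_left _ (Nat.cast_nonneg N)
          rw [step1, step2]; exact step3
      _ = 2 * ((N:ℝ) * (Real.exp (-lam) * (lam ^ (k N) / ((k N).factorial : ℝ)))) := by ring
      _ ≤ 2 * (Real.exp L * (1 * Real.exp (K * (Real.log lam + 1 - Real.log K)))) := by
          apply mul_le_mul_of_nonneg_left _ (by norm_num)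
          rw [hNval]
          apply mul_le_mul_of_nonneg_left _ (Real.exp_pos _).le
          apply mul_le_mul (Real.exp_le_one_iff.mpr (by linarith)) hfact (by positivity) (by norm_num)
      _ = 2 * Real.exp (L + K * (Real.log lam + 1 - Real.log K)) := by
          rw [one_mul, ← Real.exp_add]
      _ ≤ 2 * Real.exp (-(ε/2) * L) := by
          apply mul_le_mul_of_nonneg_left (Real.exp_le_exp.mpr hexpo) (by norm_num)
  · have h1 : Tendsto (fun N : ℕ => -(ε/2) * Real.log N) atTop atBot := by
      apply Tendsto.const_mul_atTop_of_neg (by linarith : -(ε/2) < 0) hlogN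
    have h2 := Real.tendsto_exp_atBot.comp h1
    have := h2.const_mul (2:ℝ)
    simpa using this
end

section
/- Mean and variance of the normalized support size on the simplex: Let q ≥ 2 and N ≥ 1 be integers, let X be uniformly distributed on the discrete simplex S_{q,N}, and set S = |supp(X)|/q. Then E[S] = N/(N+q−1) and Var(S) = N(N−1)(q−1) / (q·(N+q−1)²·(N+q−2)). -/
open scoped BigOperators

lemma mem_simplex {q N : ℕ} {x : Fin q → ℕ} : x ∈ simplex q N ↔ ∑ i, x i = N :=
  Finset.Nat.mem_antidiagonalTuple

lemma sum_transfer (q M : ℕ) (i : Fin q) (f : (Fin q → ℕ) → ℕ) :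
    ∑ x ∈ (simplex q (M+1)).filter (fun x => x i ≠ 0), f x
      = ∑ y ∈ simplex q M, f (Function.update y i (y i + 1)) := by
  have hback : ∀ x : Fin q → ℕ, x i ≠ 0 →
      Function.update (Function.update x i (x i - 1)) i
        ((Function.update x i (x i - 1)) i + 1) = x := by
    intro x hx
    funext j
    rcases eq_or_ne j i with rfl | hj
    · simp only [Function.update_self]; omega
    · simp [Function.update_of_ne hj]
  apply Finset.sum_nbij' (i := fun x => Function.update x i (x i - 1))
    (j := fun y => Function.update y i (y i + 1))
  · intro x hx
    simp only [Finset.mem_filter, mem_simplex] at hx ⊢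
    obtain ⟨hs, hne⟩ := hx
    rw [Finset.sum_update_of_mem (Finset.mem_univ i), ← Finset.erase_eq]
    rw [← Finset.add_sum_erase _ _ (Finset.mem_univ i)] at hs
    omega
  · intro y hy
    simp only [mem_simplex] at hy
    simp only [Finset.mem_filter, mem_simplex]
    refine ⟨?_, by simp⟩
    rw [Finset.sum_update_of_mem (Finset.mem_univ i), ← Finset.erase_eq]
    rw [← Finset.add_sum_erase _ _ (Finset.mem_univ i)] at hy
    omega
  · intro x hx
    simp only [Finset.mem_filter] at hx
    exact hback x hx.2
  · intro y hy
    funext j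
    rcases eq_or_ne j i with rfl | hj
    · simp
    · simp [Function.update_of_ne hj]
  · intro x hx
    simp only [Finset.mem_filter] at hx
    conv_lhs => rw [← hback x hx.2]

lemma card_filter_ne (q M : ℕ) (i : Fin q) :
    ((simplex q (M+1)).filter (fun x => x i ≠ 0)).card = (simplex q M).card := by
  have h := sum_transfer q M i (fun _ => 1)
  simpa using h

def pcard (q M : ℕ) : ℕ := match M with
  | 0 => 0
  | (M' + 1) => (simplex q M').card

lemma card_filter_ne' (q M : ℕ) (j : Fin q) :
    ((simplex q M).filter (fun y => y j ≠ 0)).card = pcard q M := by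
  match M with
  | 0 =>
    have h0 : simplex q 0 = {0} := Finset.Nat.antidiagonalTuple_zero_right q
    simp [h0, pcard, Finset.filter_singleton]
  | (M' + 1) => exact card_filter_ne q M' j

lemma I1 (q M : ℕ) :
    (M+1) * (simplex q (M+1)).card = (M+q) * (simplex q M).card := by
  have lhs : ∑ x ∈ simplex q (M+1), ∑ i, x i = (M+1) * (simplex q (M+1)).card := by
    rw [Finset.sum_congr rfl (fun x hx => mem_simplex.mp hx), Finset.sum_const, smul_eq_mul,
      mul_comm]
  rw [← lhs, Finset.sum_comm]
  have step : ∀ i : Fin q, ∑ x ∈ simplex q (M+1), x i = ∑ y ∈ simplex q M, (y i + 1) := by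
    intro i
    rw [← Finset.sum_filter_of_ne (fun x _ h => h)]
    have h := sum_transfer q M i (fun x => x i)
    simpa using h
  rw [Finset.sum_congr rfl (fun i _ => step i), Finset.sum_comm]
  have : ∀ y : Fin q → ℕ, y ∈ simplex q M → ∑ i : Fin q, (y i + 1) = M + q := by
    intro y hy
    rw [Finset.sum_add_distrib, mem_simplex.mp hy]
    simp
  rw [Finset.sum_congr rfl this, Finset.sum_const, smul_eq_mul, mul_comm]

lemma I2 (q M : ℕ) :
    M * (simplex q M).card = (M + q - 1) * pcard q M := by
  match M with
  | 0 => simp [pcard]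
  | (M' + 1) =>
    have := I1 q M'
    have he : M' + 1 + q - 1 = M' + q := by omega
    rw [he]
    exact this

lemma card_pair (q M : ℕ) {i j : Fin q} (hij : i ≠ j) :
    ((simplex q (M+1)).filter (fun x => x i ≠ 0 ∧ x j ≠ 0)).card = pcard q M := by
  rw [← Finset.filter_filter, Finset.card_filter]
  have h := sum_transfer q M i (fun x => if x j ≠ 0 then 1 else 0)
  rw [h]
  have : ∀ y : Fin q → ℕ, (if (Function.update y i (y i + 1)) j ≠ 0 then 1 else 0)
      = (if y j ≠ 0 then 1 else 0) := by
    intro y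
    rw [Function.update_of_ne (Ne.symm hij)]
  rw [Finset.sum_congr rfl (fun y _ => this y), ← Finset.card_filter]
  exact card_filter_ne' q M j

/-- The number of nonzero coordinates (support size) of a vector. -/
def suppCard {q : ℕ} (x : Fin q → ℕ) : ℕ := (Finset.univ.filter fun i => x i ≠ 0).card

lemma suppCard_eq_sum {q : ℕ} (x : Fin q → ℕ) :
    suppCard x = ∑ i : Fin q, if x i ≠ 0 then 1 else 0 := by
  rw [suppCard, Finset.card_filter]

lemma S1 (q M : ℕ) :
    ∑ x ∈ simplex q (M+1), suppCard x = q * (simplex q M).card := by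
  rw [Finset.sum_congr rfl (fun x _ => suppCard_eq_sum x), Finset.sum_comm]
  have : ∀ i : Fin q, (∑ x ∈ simplex q (M+1), if x i ≠ 0 then 1 else 0)
      = (simplex q M).card := by
    intro i
    rw [← Finset.card_filter]
    exact card_filter_ne q M i
  rw [Finset.sum_congr rfl (fun i _ => this i), Finset.sum_const, smul_eq_mul]
  simp

lemma S2 (q M : ℕ) :
    ∑ x ∈ simplex q (M+1), (suppCard x)^2
      = q * (simplex q M).card + q * (q-1) * pcard q M := by
  have expand : ∀ x : Fin q → ℕ, (suppCard x)^2
      = ∑ i : Fin q, ∑ j : Fin q, if x i ≠ 0 ∧ x j ≠ 0 then 1 else 0 := by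
    intro x
    rw [suppCard_eq_sum, pow_two, Finset.sum_mul_sum]
    congr 1; funext i; congr 1; funext j
    by_cases hi : x i ≠ 0 <;> by_cases hj : x j ≠ 0 <;> simp [hi, hj]
  rw [Finset.sum_congr rfl (fun x _ => expand x), Finset.sum_comm]
  have inner : ∀ i : Fin q,
      (∑ x ∈ simplex q (M+1), ∑ j : Fin q, if x i ≠ 0 ∧ x j ≠ 0 then 1 else 0)
        = (simplex q M).card + (q-1) * pcard q M := by
    intro i
    rw [Finset.sum_comm]
    have term : ∀ j : Fin q,
        (∑ x ∈ simplex q (M+1), if x i ≠ 0 ∧ x j ≠ 0 then 1 else 0)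
          = if i = j then (simplex q M).card else pcard q M := by
      intro j
      rw [← Finset.card_filter]
      rcases eq_or_ne i j with rfl | hij
      · simp only [if_pos rfl, and_self]
        exact card_filter_ne q M i
      · rw [if_neg hij]
        exact card_pair q M hij
    rw [Finset.sum_congr rfl (fun j _ => term j),
      ← Finset.add_sum_erase _ _ (Finset.mem_univ i), if_pos rfl]
    congr 1
    rw [Finset.sum_congr rfl (fun j hj => if_neg (Finset.ne_of_mem_erase hj).symm),
      Finset.sum_const, smul_eq_mul, Finset.card_erase_of_mem (Finset.mem_univ i),
      Finset.card_univ, Fintype.card_fin]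
  rw [Finset.sum_congr rfl (fun i _ => inner i), Finset.sum_const, smul_eq_mul,
    Finset.card_univ, Fintype.card_fin]
  ring

lemma simplex_nonempty (q M : ℕ) (hq : 1 ≤ q) : 0 < (simplex q M).card := by
  refine Finset.card_pos.mpr ⟨fun k => if k = ⟨0, by omega⟩ then M else 0, ?_⟩
  rw [mem_simplex]
  simp

/-- Mean and variance of the normalized support size `S = |supp(X)|/q` of a uniformly
distributed point `X` of the simplex `S_{q,N}`:
`E[S] = N/(N+q-1)` and `Var(S) = N(N-1)(q-1)/(q (N+q-1)² (N+q-2))`. -/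
theorem simplex_support_mean_var (q N : ℕ) (hq : 2 ≤ q) (hN : 1 ≤ N) :
    (∑ x ∈ simplex q N, (suppCard x : ℝ) / (q : ℝ)) / ((simplex q N).card : ℝ)
        = (N : ℝ) / ((N : ℝ) + (q : ℝ) - 1) ∧
      (∑ x ∈ simplex q N,
          ((suppCard x : ℝ) / (q : ℝ) - (N : ℝ) / ((N : ℝ) + (q : ℝ) - 1)) ^ 2) /
          ((simplex q N).card : ℝ)
        = (N : ℝ) * ((N : ℝ) - 1) * ((q : ℝ) - 1) /
            ((q : ℝ) * ((N : ℝ) + (q : ℝ) - 1) ^ 2 * ((N : ℝ) + (q : ℝ) - 2)) := by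
  obtain ⟨M, rfl⟩ : ∃ M, N = M + 1 := ⟨N - 1, by omega⟩
  have hq0 : (q:ℝ) ≠ 0 := by positivity
  have hq2 : (2:ℝ) ≤ (q:ℝ) := by exact_mod_cast hq
  have hMnn : (0:ℝ) ≤ (M:ℝ) := Nat.cast_nonneg M
  have hMq : ((M:ℝ) + q) ≠ 0 := by nlinarith
  have hMq1 : ((M:ℝ) + q - 1) ≠ 0 := by nlinarith
  have hT1pos : (0:ℝ) < ((simplex q (M+1)).card : ℝ) := by
    exact_mod_cast simplex_nonempty q (M+1) (by omega)
  have hT1 : ((simplex q (M+1)).card : ℝ) ≠ 0 := ne_of_gt hT1pos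
  have hA : ((M:ℝ)+1) * ((simplex q (M+1)).card : ℝ) = ((M:ℝ)+q) * ((simplex q M).card : ℝ) := by
    exact_mod_cast I1 q M
  have hB : (M:ℝ) * ((simplex q M).card : ℝ) = ((M:ℝ)+q-1) * (pcard q M : ℝ) := by
    have h2 : ((M * (simplex q M).card : ℕ) : ℝ) = (((M + q - 1) * pcard q M : ℕ) : ℝ) := by
      exact_mod_cast I2 q M
    push_cast [Nat.cast_sub (by omega : 1 ≤ M + q)] at h2
    linarith [h2]
  have hT0val : ((simplex q M).card : ℝ)
      = ((M:ℝ)+1) * ((simplex q (M+1)).card : ℝ) / ((M:ℝ)+q) := by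
    field_simp
    linarith [hA]
  have hPval : (pcard q M : ℝ)
      = (M:ℝ) * (((M:ℝ)+1) * ((simplex q (M+1)).card : ℝ)) / (((M:ℝ)+q) * ((M:ℝ)+q-1)) := by
    rw [eq_div_iff (mul_ne_zero hMq hMq1)]
    rw [hT0val] at hB
    field_simp at hB
    nlinarith [hB]
  have hs1 : (∑ x ∈ simplex q (M+1), (suppCard x : ℝ)) = (q:ℝ) * ((simplex q M).card : ℝ) := by
    exact_mod_cast S1 q M
  have hs2 : (∑ x ∈ simplex q (M+1), (suppCard x : ℝ)^2)
      = (q:ℝ) * ((simplex q M).card : ℝ) + (q:ℝ) * ((q:ℝ)-1) * (pcard q M : ℝ) := by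
    have h2 : ((∑ x ∈ simplex q (M+1), (suppCard x)^2 : ℕ) : ℝ)
        = ((q * (simplex q M).card + q * (q-1) * pcard q M : ℕ) : ℝ) := by
      exact_mod_cast S2 q M
    push_cast [Nat.cast_sub (by omega : 1 ≤ q)] at h2
    convert h2 using 2
  have hsdiv : (∑ x ∈ simplex q (M+1), (suppCard x : ℝ) / (q:ℝ))
      = ((simplex q M).card : ℝ) := by
    rw [← Finset.sum_div, hs1]
    exact mul_div_cancel_left₀ _ hq0
  constructor
  · rw [hsdiv, hT0val]
    push_cast
    rw [div_div, div_eq_div_iff (mul_ne_zero hMq hT1) (by nlinarith : ((M:ℝ)+1+q-1) ≠ 0)]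
    ring
  · have expand : ∀ x : Fin q → ℕ,
        ((suppCard x : ℝ) / (q:ℝ) - ((M+1:ℕ) : ℝ) / (((M+1:ℕ):ℝ) + (q:ℝ) - 1)) ^ 2
          = ((suppCard x : ℝ))^2 / (q:ℝ)^2
            - 2 * ((((M:ℝ)+1)) / ((M:ℝ)+(q:ℝ))) * ((suppCard x : ℝ) / (q:ℝ))
            + (((M:ℝ)+1) / ((M:ℝ)+(q:ℝ)))^2 := by
      intro x
      push_cast
      have h : ((M:ℝ)+1+(q:ℝ)-1) = (M:ℝ)+(q:ℝ) := by ring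
      rw [h]
      field_simp
      ring
    rw [Finset.sum_congr rfl (fun x _ => expand x)]
    rw [Finset.sum_add_distrib, Finset.sum_sub_distrib, Finset.sum_const, ← Finset.sum_div,
      hs2, ← Finset.mul_sum, hsdiv]
    rw [hT0val, hPval]
    push_cast
    rw [div_eq_div_iff hT1 (by
      apply mul_ne_zero (mul_ne_zero hq0 (pow_ne_zero 2 (by nlinarith : ((M:ℝ)+1+q-1) ≠ 0)))
      nlinarith)]
    rw [nsmul_eq_mul]
    field_simp
    ring
end

section
/- Ball-size bound on the simplex: Let q ≥ 1, N ≥ 1 and r ≥ 0 be integers, let n ∈ S_{q,N}, and set m = |supp(n)|. Then the number of points y ∈ S_{q,N} with (1/2)∑_i |n_i − y_i| ≤ r is at most ∑_{j=0}^{r} C(j+m−1, m−1)·C(j+q−1, q−1). -/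
open scoped BigOperators Classical

lemma count_sum_replicate {α : Type*} [Fintype α] [DecidableEq α] (g : α → ℕ) (a : α) :
    (∑ i, Multiset.replicate (g i) i).count a = g a := by
  rw [Multiset.count_sum']
  simp [Multiset.count_replicate]

lemma card_sum_replicate {α : Type*} [Fintype α] [DecidableEq α] (g : α → ℕ) :
    Multiset.card (∑ i, Multiset.replicate (g i) i) = ∑ i, g i := by
  rw [Multiset.card_sum]
  simp

lemma sum_replicate_count {α : Type*} [Fintype α] [DecidableEq α] (m : Multiset α) :
    ∑ i, Multiset.replicate (m.count i) i = m :=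
  Multiset.ext.2 fun a => count_sum_replicate _ a

lemma card_antidiagonalTuple (k j : ℕ) :
    (Finset.Nat.antidiagonalTuple k j).card = Nat.multichoose k j := by
  haveI : Fintype (Sym (Fin k) j) := inferInstance
  have h : Fintype.card (Sym (Fin k) j) = Nat.multichoose k j := by
    rw [Sym.card_sym_eq_multichoose]; simp
  rw [← h, ← Finset.card_univ (α := Sym (Fin k) j)]
  apply Finset.card_bij (fun x _ => (⟨∑ i, Multiset.replicate (x i) i, by
    rw [card_sum_replicate]
    exact Finset.Nat.mem_antidiagonalTuple.mp ‹_›⟩ : Sym (Fin k) j))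
  · intro a ha; exact Finset.mem_univ (α := Sym (Fin k) j) _
  · intro a ha b hb hab
    funext i
    have := congrArg (fun s : Sym (Fin k) j => s.1.count i) hab
    simpa [count_sum_replicate] using this
  · intro s _
    refine ⟨fun i => s.1.count i, Finset.Nat.mem_antidiagonalTuple.mpr ?_, ?_⟩
    · have := s.2
      have hc := card_sum_replicate (fun i => s.1.count i)
      rw [sum_replicate_count] at hc
      omega
    · exact Subtype.ext (sum_replicate_count s.1)

lemma abs_cast_sub (a b : ℕ) :
    |(a : ℝ) - (b : ℝ)| = ((a - b : ℕ) : ℝ) + ((b - a : ℕ) : ℝ) := by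
  rcases le_total a b with h | h
  · rw [abs_sub_comm, abs_of_nonneg (sub_nonneg.2 (by exact_mod_cast h)),
      Nat.sub_eq_zero_of_le h, Nat.cast_sub h, Nat.cast_zero]
    ring
  · rw [abs_of_nonneg (sub_nonneg.2 (by exact_mod_cast h)),
      Nat.sub_eq_zero_of_le h, Nat.cast_sub h, Nat.cast_zero]
    ring

lemma choose_shift (a j : ℕ) (h : 1 ≤ a) :
    Nat.multichoose a j = (j + a - 1).choose (a - 1) := by
  rw [Nat.multichoose_eq]
  have h3 : a + j - 1 = j + a - 1 := by omega
  rw [h3, ← Nat.choose_symm (by omega : j ≤ j + a - 1)]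
  congr 1
  omega

lemma card_filter_supp_le (q j : ℕ) (n : Fin q → ℕ) :
    ((Finset.Nat.antidiagonalTuple q j).filter fun d => ∀ i, n i = 0 → d i = 0).card ≤
      Nat.multichoose (suppCard n) j := by
  set s : Finset (Fin q) := Finset.univ.filter (fun i => n i ≠ 0) with hs
  have hsc : suppCard n = s.card := rfl
  rw [hsc, ← card_antidiagonalTuple]
  set e := s.orderIsoOfFin rfl with he
  apply Finset.card_le_card_of_injOn (fun d => fun i : Fin s.card => d (e i))
  · intro d hd
    rw [Finset.mem_coe, Finset.mem_filter] at hd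
    obtain ⟨hd1, hd2⟩ := hd
    rw [Finset.mem_coe, Finset.Nat.mem_antidiagonalTuple]
    have h1 : ∑ i : Fin s.card, d (e i) = ∑ x : ↥s, d x :=
      Equiv.sum_comp e.toEquiv (fun x : ↥s => d x)
    rw [h1, Finset.sum_coe_sort s (fun x => d x)]
    rw [Finset.sum_subset (Finset.subset_univ s) (fun x _ hx => by
      apply hd2
      by_contra hnx
      exact hx (by simp [hs, hnx]))]
    exact Finset.Nat.mem_antidiagonalTuple.mp hd1
  · intro d1 h1 d2 h2 hd
    simp only [Finset.coe_filter, Set.mem_setOf_eq] at h1 h2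
    funext i
    by_cases hni : n i = 0
    · rw [h1.2 i hni, h2.2 i hni]
    · have hi : i ∈ s := by simp [hs, hni]
      have := congrFun hd (e.symm ⟨i, hi⟩)
      simpa using this

/-- Ball-size bound on the simplex: for `n ∈ S_{q,N}` with support size `m`, the number of
points of `S_{q,N}` at ℓ1-distance at most `r` from `n` is at most
`∑_{j=0}^{r} C(j+m-1, m-1) C(j+q-1, q-1)`. -/
theorem simplex_ball_size_bound (q N r : ℕ) (hq : 1 ≤ q) (hN : 1 ≤ N)
    (n : Fin q → ℕ) (hn : n ∈ simplex q N) :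
    ((simplex q N).filter fun y => (∑ i, |(n i : ℝ) - (y i : ℝ)|) / 2 ≤ (r : ℝ)).card ≤
      ∑ j ∈ Finset.range (r + 1),
        (j + suppCard n - 1).choose (suppCard n - 1) * (j + q - 1).choose (q - 1) := by
  set m := suppCard n with hm
  have hnN : ∑ i, n i = N := Finset.Nat.mem_antidiagonalTuple.mp hn
  have hm1 : 1 ≤ m := by
    by_contra h
    push_neg at h
    have h2 : (Finset.univ.filter fun i => n i ≠ 0).card < 1 := h
    have hm0 : (Finset.univ.filter fun i => n i ≠ 0) = ∅ :=
      Finset.card_eq_zero.mp (by omega)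
    have hall : ∀ i, n i = 0 := by
      intro i
      by_contra hi
      have : i ∈ Finset.univ.filter fun i => n i ≠ 0 := by simp [hi]
      simp [hm0] at this
    rw [Finset.sum_congr rfl (fun i _ => hall i), Finset.sum_const, smul_zero] at hnN
    omega
  set A : ℕ → Finset (Fin q → ℕ) := fun j =>
    (Finset.Nat.antidiagonalTuple q j).filter fun d => ∀ i, n i = 0 → d i = 0 with hA
  have key : ((simplex q N).filter fun y =>
      (∑ i, |(n i : ℝ) - (y i : ℝ)|) / 2 ≤ (r : ℝ)).card ≤
      ((Finset.range (r + 1)).sigma fun j => A j ×ˢ Finset.Nat.antidiagonalTuple q j).card := by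
    apply Finset.card_le_card_of_injOn
      (fun y => ⟨∑ i, (y i - n i), (fun i => n i - y i, fun i => y i - n i)⟩)
    · intro y hy
      rw [Finset.mem_coe, Finset.mem_filter] at hy
      obtain ⟨hy1, hy2⟩ := hy
      have hyN : ∑ i, y i = N := Finset.Nat.mem_antidiagonalTuple.mp hy1
      have hde : ∑ i, (n i - y i) = ∑ i, (y i - n i) := by
        have h1 : ∑ i, (y i + (n i - y i)) = ∑ i, (n i + (y i - n i)) :=
          Finset.sum_congr rfl fun i _ => by omega
        rw [Finset.sum_add_distrib, Finset.sum_add_distrib, hyN, hnN] at h1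
        omega
      have habs : ∑ i, |(n i : ℝ) - (y i : ℝ)| =
          ((∑ i, (n i - y i) : ℕ) : ℝ) + ((∑ i, (y i - n i) : ℕ) : ℝ) := by
        rw [Nat.cast_sum, Nat.cast_sum, ← Finset.sum_add_distrib]
        exact Finset.sum_congr rfl fun i _ => abs_cast_sub (n i) (y i)
      have hjr : ∑ i, (y i - n i) ≤ r := by
        rw [habs, hde] at hy2
        have : ((∑ i, (y i - n i) : ℕ) : ℝ) ≤ (r : ℝ) := by linarith
        exact_mod_cast this
      simp only [Finset.mem_coe, Finset.mem_sigma, Finset.mem_range, Finset.mem_product, hA,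
        Finset.mem_filter, Finset.Nat.mem_antidiagonalTuple]
      exact ⟨by omega, ⟨hde, fun i h0 => by omega⟩, trivial⟩
    · intro y1 h1 y2 h2 h
      obtain ⟨-, h2'⟩ := Sigma.mk.inj_iff.mp h
      rw [heq_iff_eq] at h2'
      have hd := congrArg Prod.fst h2'
      have he := congrArg Prod.snd h2'
      funext i
      have hdi := congrFun hd i
      have hei := congrFun he i
      simp only at hdi hei
      omega
  refine key.trans ?_
  rw [Finset.card_sigma]
  apply Finset.sum_le_sum
  intro j _
  rw [Finset.card_product]
  have hAj : (A j).card ≤ (j + m - 1).choose (m - 1) := by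
    refine (card_filter_supp_le q j n).trans_eq ?_
    exact choose_shift m j hm1
  have hBj : (Finset.Nat.antidiagonalTuple q j).card = (j + q - 1).choose (q - 1) := by
    rw [card_antidiagonalTuple]
    exact choose_shift q j hq
  rw [hBj]
  exact Nat.mul_le_mul_right _ hAj
end

section
/- Pair-collision bound on the simplex: Let q ≥ 1, N ≥ 1 and t ≥ 0 be integers. Then the number of ordered pairs (x, z) ∈ S_{q,N} × S_{q,N} with (1/2)∑_i |x_i − z_i| ≤ t is at most (t+1)·C(t+q−1, q−1)²·C(N+q−1, q−1). Equivalently, for X and Z independent uniform random vectors on S_{q,N}, P[(1/2)∑_i |X_i − Z_i| ≤ t] ≤ (t+1)·C(t+q−1, q−1)² / C(N+q−1, q−1). -/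
open scoped BigOperators Classical

lemma card_simplex (q n : ℕ) (hq : 1 ≤ q) :
    (simplex q n).card = (n + q - 1).choose (q - 1) := by
  have h1 : simplex q n = Finset.piAntidiag (Finset.univ : Finset (Fin q)) n :=
    (Finset.piAntidiag_univ_fin_eq_antidiagonalTuple n q).symm
  rw [h1, ← Finset.map_sym_eq_piAntidiag, Finset.card_map]
  rw [Finset.sym_univ, Finset.card_univ, Sym.card_sym_eq_choose]
  rw [Fintype.card_fin]
  rw [show q + n - 1 = n + q - 1 by omega, ← Nat.choose_symm (by omega : n ≤ n + q - 1)]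
  congr 1; omega

/-- Pair-collision bound on the simplex: the number of ordered pairs `(x, z)` of points of
`S_{q,N}` at ℓ1-distance at most `t` from each other is at most
`(t+1) C(t+q-1, q-1)² C(N+q-1, q-1)`. -/
theorem simplex_pair_collision_bound (q N t : ℕ) (hq : 1 ≤ q) (hN : 1 ≤ N) :
    (((simplex q N) ×ˢ (simplex q N)).filter
        fun p => (∑ i, |(p.1 i : ℝ) - (p.2 i : ℝ)|) / 2 ≤ (t : ℝ)).card ≤
      (t + 1) * ((t + q - 1).choose (q - 1)) ^ 2 * (N + q - 1).choose (q - 1) := by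
  classical
  set T : Finset ((_ : ℕ) × ((Fin q → ℕ) × (Fin q → ℕ) × (Fin q → ℕ))) :=
    (Finset.range (t+1)).sigma
      (fun d => simplex q d ×ˢ simplex q d ×ˢ simplex q (N - d)) with hT
  have step1 : (((simplex q N) ×ˢ (simplex q N)).filter
      fun p => (∑ i, |(p.1 i : ℝ) - (p.2 i : ℝ)|) / 2 ≤ (t : ℝ)).card ≤ T.card := by
    apply Finset.card_le_card_of_injOn
      (fun p => ⟨∑ i, (p.1 i - p.2 i),
        (fun i => p.1 i - p.2 i, fun i => p.2 i - p.1 i, fun i => min (p.1 i) (p.2 i))⟩)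
    · intro p hp
      simp only [Finset.coe_filter, Set.mem_setOf_eq, Finset.mem_filter, Finset.mem_product] at hp
      obtain ⟨⟨hx, hz⟩, hdist⟩ := hp
      rw [simplex, Finset.Nat.mem_antidiagonalTuple] at hx hz
      have hsum1 : (∑ i, (p.1 i - p.2 i)) + (∑ i, min (p.1 i) (p.2 i)) = N := by
        rw [← Finset.sum_add_distrib, ← hx]
        exact Finset.sum_congr rfl fun i _ => by omega
      have hsum2 : (∑ i, (p.2 i - p.1 i)) + (∑ i, min (p.1 i) (p.2 i)) = N := by
        rw [← Finset.sum_add_distrib, ← hz]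
        exact Finset.sum_congr rfl fun i _ => by omega
      have habs : ∀ i, |(p.1 i : ℝ) - (p.2 i : ℝ)|
          = (((p.1 i - p.2 i) + (p.2 i - p.1 i) : ℕ) : ℝ) := by
        intro i
        rcases le_total (p.1 i) (p.2 i) with h | h
        · rw [abs_sub_comm, abs_of_nonneg (sub_nonneg.2 (by exact_mod_cast h))]
          push_cast [Nat.sub_eq_zero_of_le h, h]; ring
        · rw [abs_of_nonneg (sub_nonneg.2 (by exact_mod_cast h))]
          push_cast [Nat.sub_eq_zero_of_le h, h]; ring
      have hab : (∑ i, (p.1 i - p.2 i)) = (∑ i, (p.2 i - p.1 i)) := by omega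
      have hdt : (∑ i, (p.1 i - p.2 i)) ≤ t := by
        rw [Finset.sum_congr rfl (fun i _ => habs i)] at hdist
        have : ((∑ i, ((p.1 i - p.2 i) + (p.2 i - p.1 i)) : ℕ) : ℝ) / 2 ≤ (t : ℝ) := by
          rw [Nat.cast_sum]; exact hdist
        have h2 : (∑ i, ((p.1 i - p.2 i) + (p.2 i - p.1 i)))
            = 2 * (∑ i, (p.1 i - p.2 i)) := by
          rw [Finset.sum_add_distrib, hab]; ring
        rw [h2] at this
        have : ((2 * ∑ i, (p.1 i - p.2 i) : ℕ) : ℝ) ≤ 2 * (t : ℝ) := by linarith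
        exact_mod_cast (by exact_mod_cast this : 2 * (∑ i, (p.1 i - p.2 i)) ≤ 2 * t)
          |> Nat.le_of_mul_le_mul_left <| by norm_num
      simp only [hT, Finset.mem_coe, Finset.mem_sigma, Finset.mem_range, Finset.mem_product,
        simplex, Finset.Nat.mem_antidiagonalTuple]
      refine ⟨by omega, trivial, by omega, by omega⟩
    · intro p1 _ p2 _ heq
      simp only [Sigma.mk.inj_iff, heq_eq_eq, Prod.mk.injEq] at heq
      obtain ⟨-, ha, hb, hm⟩ := heq
      have ha' := fun i => congrFun ha i
      have hb' := fun i => congrFun hb i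
      have hm' := fun i => congrFun hm i
      have e1 : p1.1 = p2.1 := funext fun i => by
        have := ha' i; have := hb' i; have := hm' i
        omega
      have e2 : p1.2 = p2.2 := funext fun i => by
        have := ha' i; have := hb' i; have := hm' i
        omega
      exact Prod.ext e1 e2
  refine step1.trans ?_
  rw [hT, Finset.card_sigma]
  have hbound : ∀ d ∈ Finset.range (t+1),
      (simplex q d ×ˢ simplex q d ×ˢ simplex q (N - d)).card
        ≤ ((t + q - 1).choose (q - 1)) ^ 2 * (N + q - 1).choose (q - 1) := by
    intro d hd
    rw [Finset.mem_range] at hd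
    rw [Finset.card_product, Finset.card_product,
      card_simplex q d hq, card_simplex q (N - d) hq, ← mul_assoc, ← sq]
    have h1 : (d + q - 1).choose (q - 1) ≤ (t + q - 1).choose (q - 1) :=
      Nat.choose_le_choose _ (by omega)
    have h2 : (N - d + q - 1).choose (q - 1) ≤ (N + q - 1).choose (q - 1) :=
      Nat.choose_le_choose _ (by omega)
    exact Nat.mul_le_mul (Nat.pow_le_pow_left h1 2) h2
  calc ∑ d ∈ Finset.range (t+1), (simplex q d ×ˢ simplex q d ×ˢ simplex q (N - d)).card
      ≤ ∑ _d ∈ Finset.range (t+1),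
          ((t + q - 1).choose (q - 1)) ^ 2 * (N + q - 1).choose (q - 1) :=
        Finset.sum_le_sum hbound
    _ = (t + 1) * ((t + q - 1).choose (q - 1)) ^ 2 * (N + q - 1).choose (q - 1) := by
        rw [Finset.sum_const, Finset.card_range, smul_eq_mul, mul_assoc]
end
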